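/- Let g₁(x) = log(|x| + √(x² − 1)) for real x with |x| > 1 and g₁(x) = 0 for x ∈ [−1,1] (the Green function of ℂ \ [−1,1] with pole at infinity, restricted to the real line), and for z = (z_1, z_2) ∈ ℝ² set g(z) = g₁(z_1) + g₁(z_2). Then for every z ∈ ℝ² \ [−1,1]² and N = (n+1)² − 1: in the corner case |z_1| > 1 and |z_2| > 1 the quotient K_N^μ(z,z)/e^{2n·g(z)} converges as n → ∞ to a finite nonzero limit; otherwise (exactly one coordinate of z lies outside [−1,1]) the quotient K_N^μ(z,z)/((n+1)·e^{2n·g(z)}) converges as n → ∞ to a finite nonzero limit. -/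

import Mathlib

namespace CD2

/-- The Christoffel–Darboux kernel `K_n^ω(x,y)` of the Chebyshev (arcsine) measure
on `[-1,1]`, built from the orthonormal polynomials `p_0 = 1`, `p_j = √2 T_j`
(`j ≥ 1`); so `p_j(x) p_j(y) = 2 T_j(x) T_j(y)` for `j ≥ 1`. -/
noncomputable def chebKer (n : ℕ) (x y : ℝ) : ℝ :=
  ∑ j ∈ Finset.range (n + 1),
    if j = 0 then 1
    else 2 * (Polynomial.Chebyshev.T ℝ (j : ℤ)).eval x *
      (Polynomial.Chebyshev.T ℝ (j : ℤ)).eval y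

/-- The Green function of `ℂ \ [-1,1]` with pole at infinity, restricted to the
real line: `g₁(x) = log(|x| + √(x²-1))` for `|x| > 1`, and `0` on `[-1,1]`. -/
noncomputable def green1 (x : ℝ) : ℝ :=
  if 1 < |x| then Real.log (|x| + Real.sqrt (x ^ 2 - 1)) else 0

open Polynomial Polynomial.Chebyshev Filter Real

lemma teval (q : ℝ) (hq : q ≠ 0) (n : ℕ) :
    (T ℝ (n : ℤ)).eval ((q + q⁻¹) / 2) = (q ^ n + (q⁻¹) ^ n) / 2 := by
  induction n using Nat.twoStepInduction with
  | zero => simp [T_zero]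
  | one => norm_num [T_one]
  | more n ih1 ih2 =>
    rw [show ((n + 2 : ℕ) : ℤ) = (n : ℤ) + 2 by push_cast; ring, T_add_two]
    rw [show ((n + 1 : ℕ) : ℤ) = (n : ℤ) + 1 by push_cast; ring] at ih2
    simp only [Polynomial.eval_sub, Polynomial.eval_mul, Polynomial.eval_X,
      Polynomial.eval_ofNat, ih1, ih2]
    field_simp
    have hq' : q * q⁻¹ = 1 := mul_inv_cancel₀ hq
    linear_combination (q * q⁻¹ ^ n - q⁻¹ * q⁻¹ ^ n) * hq'


lemma two_T_sq (y : ℝ) (m : ℕ) :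
    2 * (T ℝ (m : ℤ)).eval y * (T ℝ (m : ℤ)).eval y
      = (T ℝ (2 * m : ℤ)).eval y + 1 := by
  have h := Polynomial.Chebyshev.T_mul_T ℝ (m : ℤ) (m : ℤ)
  have := congrArg (Polynomial.eval y) h
  simpa [two_mul, T_zero] using this


lemma tendstoA (x : ℝ) (hx : 1 < |x|) :
    ∃ L : ℝ, 0 < L ∧ Tendsto
      (fun n : ℕ => chebKer n x x / Real.exp (2 * n * green1 x))
      atTop (nhds L) := by
  have hx2 : 1 < x ^ 2 := by nlinarith [sq_abs x, abs_nonneg x]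
  set s0 : ℝ := Real.sqrt (x ^ 2 - 1) with hs0def
  have hs0 : 0 ≤ s0 := Real.sqrt_nonneg _
  have hs0sq : s0 ^ 2 = x ^ 2 - 1 := Real.sq_sqrt (by linarith)
  set q : ℝ := |x| + s0 with hqdef
  have hq1 : 1 < q := lt_of_lt_of_le hx (le_add_of_nonneg_right hs0)
  have hq0 : 0 < q := by linarith
  have hmul : q * (|x| - s0) = 1 := by
    have h := sq_abs x
    nlinarith
  have hqi : q⁻¹ = |x| - s0 := inv_eq_of_mul_eq_one_right hmul
  have habs : |x| = (q + q⁻¹) / 2 := by rw [hqi, hqdef]; ring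
  set qt : ℝ := if 0 < x then q else -q with hqtdef
  have hqt0 : qt ≠ 0 := by
    rw [hqtdef]; split <;> [exact ne_of_gt hq0; exact neg_ne_zero.mpr (ne_of_gt hq0)]
  have hqt2 : qt ^ 2 = q ^ 2 := by rw [hqtdef]; split <;> simp
  have hxqt : x = (qt + qt⁻¹) / 2 := by
    rw [hqtdef]; split
    · rename_i h; rw [← habs, abs_of_pos h]
    · rename_i h
      push_neg at h
      have hxneg : x < 0 := lt_of_le_of_ne h (by rintro rfl; norm_num at hx)
      rw [inv_neg]
      have : x = -|x| := by rw [abs_of_neg hxneg]; ring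
      rw [this, habs]; ring
  set r : ℝ := q ^ 2 with hrdef
  have hr1 : 1 < r := by nlinarith
  have hr0 : 0 < r := by linarith
  set s : ℝ := r⁻¹ with hsdef
  have hs0' : 0 < s := inv_pos.mpr hr0
  have hs1 : s < 1 := by rw [hsdef]; exact inv_lt_one_of_one_lt₀ hr1
  have hrs : r * s = 1 := mul_inv_cancel₀ (ne_of_gt hr0)
  have T2m : ∀ m : ℕ, (T ℝ (2 * (m : ℤ))).eval x = (r ^ m + s ^ m) / 2 := by
    intro m
    have h := teval qt hqt0 (2 * m)
    rw [← hxqt] at h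
    rw [show (2 * (m : ℤ)) = ((2 * m : ℕ) : ℤ) by push_cast; ring, h,
      pow_mul, pow_mul, hqt2, inv_pow, hqt2, ← hsdef]
  have kerA : ∀ n : ℕ, chebKer n x x
      = n + ((∑ j ∈ Finset.range (n + 1), r ^ j)
        + (∑ j ∈ Finset.range (n + 1), s ^ j)) / 2 := by
    intro n
    induction n with
    | zero => simp [chebKer]
    | succ n ih =>
      rw [Finset.sum_range_succ (fun j => r ^ j) (n + 1),
        Finset.sum_range_succ (fun j => s ^ j) (n + 1)]
      rw [chebKer, Finset.sum_range_succ, ← chebKer, ih, if_neg (Nat.succ_ne_zero n)]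
      rw [two_T_sq,
        show ((2 * (n + 1 : ℕ) : ℤ)) = 2 * ((n + 1 : ℕ) : ℤ) by push_cast; ring, T2m]
      push_cast
      ring
  have hg : green1 x = Real.log q := by rw [green1, if_pos hx]
  have hexp : ∀ n : ℕ, Real.exp (2 * n * green1 x) = r ^ n := by
    intro n
    rw [hg, show (2 * (n : ℝ) * Real.log q) = (n : ℝ) * (2 * Real.log q) by ring,
      Real.exp_nat_mul, two_mul, Real.exp_add, Real.exp_log hq0, hrdef]
    ring_nf
  set Gs : ℕ → ℝ := fun n => ∑ j ∈ Finset.range (n + 1), s ^ j with hGsdef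
  have hGr_s : ∀ n : ℕ, (∑ j ∈ Finset.range (n + 1), r ^ j) * s ^ n = Gs n := by
    intro n
    rw [Finset.sum_mul]
    have h1 : ∀ j ∈ Finset.range (n + 1), r ^ j * s ^ n = s ^ (n - j) := by
      intro j hj
      have hj' : j ≤ n := Nat.lt_succ_iff.mp (Finset.mem_range.mp hj)
      calc r ^ j * s ^ n = r ^ j * (s ^ j * s ^ (n - j)) := by
            rw [← pow_add, Nat.add_sub_cancel' hj']
        _ = (r * s) ^ j * s ^ (n - j) := by rw [mul_pow]; ring
        _ = s ^ (n - j) := by rw [hrs, one_pow, one_mul]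
    rw [Finset.sum_congr rfl h1]
    have := Finset.sum_range_reflect (fun j => s ^ j) (n + 1)
    simpa using this
  have hGs : Tendsto Gs atTop (nhds (1 - s)⁻¹) := by
    have h := (hasSum_geometric_of_lt_one hs0'.le hs1).tendsto_sum_nat
    exact h.comp (tendsto_add_atTop_nat 1)
  have h0 : Tendsto (fun n : ℕ => s ^ n) atTop (nhds 0) :=
    tendsto_pow_atTop_nhds_zero_of_lt_one hs0'.le hs1
  have hn1 : Tendsto (fun n : ℕ => (n : ℝ) * s ^ n) atTop (nhds 0) :=
    tendsto_self_mul_const_pow_of_lt_one hs0'.le hs1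
  have h1s : 0 < 1 - s := by linarith
  refine ⟨(1 - s)⁻¹ / 2, by positivity, ?_⟩
  have key : Tendsto (fun n : ℕ => (n : ℝ) * s ^ n + (Gs n + Gs n * s ^ n) / 2)
      atTop (nhds (0 + ((1 - s)⁻¹ + (1 - s)⁻¹ * 0) / 2)) :=
    hn1.add ((hGs.add (hGs.mul h0)).div_const 2)
  have key2 : Tendsto (fun n : ℕ => (n : ℝ) * s ^ n + (Gs n + Gs n * s ^ n) / 2)
      atTop (nhds ((1 - s)⁻¹ / 2)) := by
    convert key using 2; ring
  refine key2.congr fun n => ?_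
  rw [hexp n, kerA n, div_eq_mul_inv _ (r ^ n), ← inv_pow, ← hsdef]
  linear_combination (-1 / 2 : ℝ) * hGr_s n

lemma tendstoB (x : ℝ) (hx : |x| ≤ 1) :
    ∃ c : ℝ, 0 < c ∧ Tendsto
      (fun n : ℕ => chebKer n x x / ((n : ℝ) + 1)) atTop (nhds c) := by
  have hx' := abs_le.mp hx
  set θ : ℝ := Real.arccos x with hθdef
  have hcos : Real.cos θ = x := Real.cos_arccos hx'.1 hx'.2
  have hT2 : ∀ m : ℕ, (T ℝ (2 * (m : ℤ))).eval x = Real.cos (2 * m * θ) := by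
    intro m
    rw [← hcos, T_real_cos]
    norm_num
  have kerB : ∀ n : ℕ, chebKer n x x
      = ((n : ℝ) + 1) + ∑ j ∈ Finset.range n, Real.cos (2 * (j + 1) * θ) := by
    intro n
    induction n with
    | zero => simp [chebKer]
    | succ n ih =>
      rw [Finset.sum_range_succ, chebKer, Finset.sum_range_succ, ← chebKer, ih,
        if_neg (Nat.succ_ne_zero n), two_T_sq,
        show ((2 * (n + 1 : ℕ) : ℤ)) = 2 * ((n + 1 : ℕ) : ℤ) by push_cast; ring, hT2]
      push_cast
      ring
  rcases lt_or_eq_of_le hx with hlt | heq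
  · -- |x| < 1, limit 1
    have hx2 : x ^ 2 < 1 := by nlinarith [sq_abs x, abs_nonneg x]
    have hsθ : Real.sin θ = Real.sqrt (1 - x ^ 2) := Real.sin_arccos x
    have hsθ0 : 0 < Real.sin θ := by
      rw [hsθ]; exact Real.sqrt_pos.mpr (by linarith)
    set S : ℕ → ℝ := fun n => ∑ j ∈ Finset.range n, Real.cos (2 * (j + 1) * θ)
      with hSdef
    have tele : ∀ n : ℕ, S n * (2 * Real.sin θ)
        = Real.sin ((2 * n + 1) * θ) - Real.sin θ := by
      intro n
      have hterm : ∀ j : ℕ, Real.cos (2 * (j + 1) * θ) * (2 * Real.sin θ)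
          = Real.sin ((2 * (j + 1) + 1) * θ) - Real.sin ((2 * j + 1) * θ) := by
        intro j
        rw [show ((2 * ((j : ℝ) + 1) + 1) * θ) = 2 * ((j : ℝ) + 1) * θ + θ by ring,
          show ((2 * (j : ℝ) + 1) * θ) = 2 * ((j : ℝ) + 1) * θ - θ by ring,
          Real.sin_add, Real.sin_sub]
        ring
      rw [hSdef]
      simp only [Finset.sum_mul]
      rw [Finset.sum_congr rfl fun j _ => hterm j]
      have := Finset.sum_range_sub (fun j : ℕ => Real.sin ((2 * j + 1) * θ)) n
      push_cast at this ⊢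
      rw [this]
      norm_num
    have hbound : ∀ n : ℕ, |S n| ≤ 1 / Real.sin θ := by
      intro n
      have h1 : |Real.sin ((2 * n + 1) * θ) - Real.sin θ| ≤ 2 := by
        have := Real.neg_one_le_sin ((2 * n + 1) * θ)
        have := Real.sin_le_one ((2 * n + 1) * θ)
        have := Real.neg_one_le_sin θ
        have := Real.sin_le_one θ
        rw [abs_le]; constructor <;> linarith
      have h2 : S n = (Real.sin ((2 * n + 1) * θ) - Real.sin θ) / (2 * Real.sin θ) := by
        rw [← tele n]; field_simp
      rw [h2, abs_div, abs_of_pos (by positivity : (0:ℝ) < 2 * Real.sin θ)]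
      rw [div_le_div_iff₀ (by positivity) hsθ0]
      calc |Real.sin ((2 * n + 1) * θ) - Real.sin θ| * Real.sin θ
          ≤ 2 * Real.sin θ := by nlinarith [abs_nonneg (Real.sin ((2 * n + 1) * θ) - Real.sin θ)]
        _ = 1 * (2 * Real.sin θ) := by ring
    have hzero : Tendsto (fun n : ℕ => S n / ((n : ℝ) + 1)) atTop (nhds 0) := by
      refine squeeze_zero_norm (a := fun n : ℕ => (1 / Real.sin θ) * (1 / ((n : ℝ) + 1)))
        (fun n => ?_) ?_
      · 
        rw [Real.norm_eq_abs, abs_div, abs_of_pos (by positivity : (0:ℝ) < (n : ℝ) + 1)]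
        rw [div_eq_mul_one_div]
        exact mul_le_mul_of_nonneg_right (hbound n) (by positivity)
      · have := tendsto_one_div_add_atTop_nhds_zero_nat.const_mul (1 / Real.sin θ)
        simpa using this
    refine ⟨1, one_pos, ?_⟩
    have key : Tendsto (fun n : ℕ => 1 + S n / ((n : ℝ) + 1)) atTop (nhds (1 + 0)) :=
      tendsto_const_nhds.add hzero
    rw [add_zero] at key
    refine key.congr fun n => ?_
    rw [kerB n]
    have hn : ((n : ℝ) + 1) ≠ 0 := by positivity
    field_simp
    rfl
  · -- |x| = 1, limit 2
    have hcos1 : ∀ j : ℕ, Real.cos (2 * ((j : ℝ) + 1) * θ) = 1 := by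
      intro j
      rcases abs_eq (by norm_num : (0:ℝ) ≤ 1) |>.mp heq with h1 | h1
      · have : θ = 0 := by rw [hθdef, h1, Real.arccos_one]
        rw [this]; norm_num
      · have : θ = π := by rw [hθdef, h1, Real.arccos_neg_one]
        rw [this, show (2 * ((j : ℝ) + 1) * π) = ((j + 1 : ℕ) : ℝ) * (2 * π) by push_cast; ring]
        exact Real.cos_nat_mul_two_pi (j + 1)
    refine ⟨2, two_pos, ?_⟩
    have key : Tendsto (fun n : ℕ => 2 - 1 / ((n : ℝ) + 1)) atTop (nhds (2 - 0)) :=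
      tendsto_const_nhds.sub tendsto_one_div_add_atTop_nhds_zero_nat
    rw [sub_zero] at key
    refine key.congr fun n => ?_
    rw [kerB n]
    have hsum : ∑ j ∈ Finset.range n, Real.cos (2 * ((j : ℝ) + 1) * θ) = n := by
      rw [Finset.sum_congr rfl fun j _ => hcos1 j]
      simp
    push_cast
    rw [hsum]
    have hn : ((n : ℝ) + 1) ≠ 0 := by positivity
    field_simp
    ring

/-- Asymptotics of the tensor Chebyshev Christoffel–Darboux kernel
`K_N^μ(z,z) = K_n^ω(z_1,z_1) K_n^ω(z_2,z_2)`, `N = (n+1)² - 1`, outside the unit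
square: with `g(z) = g₁(z_1) + g₁(z_2)`, the kernel behaves like `e^{2ng(z)}` in
the corner case and like `(n+1) e^{2ng(z)}` otherwise. -/
theorem statement19 (z : ℝ × ℝ)
    (hz : z ∉ (Set.Icc (-1 : ℝ) 1) ×ˢ (Set.Icc (-1 : ℝ) 1)) :
    (1 < |z.1| → 1 < |z.2| →
      ∃ L : ℝ, L ≠ 0 ∧ Filter.Tendsto
        (fun n : ℕ => chebKer n z.1 z.1 * chebKer n z.2 z.2 /
          Real.exp (2 * n * (green1 z.1 + green1 z.2)))
        Filter.atTop (nhds L)) ∧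
    (¬ (1 < |z.1| ∧ 1 < |z.2|) →
      ∃ L : ℝ, L ≠ 0 ∧ Filter.Tendsto
        (fun n : ℕ => chebKer n z.1 z.1 * chebKer n z.2 z.2 /
          (((n : ℝ) + 1) * Real.exp (2 * n * (green1 z.1 + green1 z.2))))
        Filter.atTop (nhds L)) := by
  constructor
  · intro h1 h2
    obtain ⟨L1, hL1, hT1⟩ := tendstoA z.1 h1
    obtain ⟨L2, hL2, hT2⟩ := tendstoA z.2 h2
    refine ⟨L1 * L2, ne_of_gt (mul_pos hL1 hL2), ?_⟩
    refine (hT1.mul hT2).congr fun n => ?_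
    rw [show 2 * (n : ℝ) * (green1 z.1 + green1 z.2)
        = 2 * n * green1 z.1 + 2 * n * green1 z.2 by ring,
      Real.exp_add, div_mul_div_comm]
  · intro h
    have hor : 1 < |z.1| ∨ 1 < |z.2| := by
      by_contra hc
      push_neg at hc
      exact hz ⟨Set.mem_Icc.mpr (abs_le.mp hc.1), Set.mem_Icc.mpr (abs_le.mp hc.2)⟩
    rcases hor with h1 | h2
    · have hb : |z.2| ≤ 1 := not_lt.mp fun hh => h ⟨h1, hh⟩
      obtain ⟨L1, hL1, hT1⟩ := tendstoA z.1 h1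
      obtain ⟨c2, hc2, hT2⟩ := tendstoB z.2 hb
      refine ⟨L1 * c2, ne_of_gt (mul_pos hL1 hc2), ?_⟩
      have hg0 : green1 z.2 = 0 := by rw [green1, if_neg (not_lt.mpr hb)]
      refine (hT1.mul hT2).congr fun n => ?_
      rw [hg0, add_zero, div_mul_div_comm,
        mul_comm (Real.exp (2 * n * green1 z.1)) ((n : ℝ) + 1)]
    · have hb : |z.1| ≤ 1 := not_lt.mp fun hh => h ⟨hh, h2⟩
      obtain ⟨c1, hc1, hT1⟩ := tendstoB z.1 hb
      obtain ⟨L2, hL2, hT2⟩ := tendstoA z.2 h2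
      refine ⟨c1 * L2, ne_of_gt (mul_pos hc1 hL2), ?_⟩
      have hg0 : green1 z.1 = 0 := by rw [green1, if_neg (not_lt.mpr hb)]
      refine (hT1.mul hT2).congr fun n => ?_
      rw [hg0, zero_add, div_mul_div_comm]

end CD2
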